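/- Let E be a finite-dimensional complex normed vector space and let f : ℂ × ℂ → E be a function that is holomorphic (complex differentiable) on the complement of the single point (0,0). Then f extends to a holomorphic function on all of ℂ × ℂ; that is, there exists a holomorphic function g : ℂ × ℂ → E with g(w) = f(w) for all w ≠ (0,0). -/

import Mathlib

open Complex Metric Set MeasureTheory Filter intervalIntegral
open scoped Real Topology

set_option maxHeartbeats 1600000 in
set_option synthInstance.maxHeartbeats 800000 in
/-- Hartogs' extension phenomenon in two complex variables: a function holomorphic on
`ℂ × ℂ` minus the single point `(0, 0)`, with values in a finite-dimensional complex
normed vector space, extends to a holomorphic function on all of `ℂ × ℂ`. -/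
theorem hartogs_extension_of_isolated_singularity
    {E : Type*} [NormedAddCommGroup E] [NormedSpace ℂ E] [FiniteDimensional ℂ E]
    (f : ℂ × ℂ → E) (hf : DifferentiableOn ℂ f ({((0 : ℂ), (0 : ℂ))}ᶜ : Set (ℂ × ℂ))) :
    ∃ g : ℂ × ℂ → E, Differentiable ℂ g ∧ ∀ w : ℂ × ℂ, w ≠ (0, 0) → g w = f w := by
  have hcont : ContinuousOn f ({((0 : ℂ), (0 : ℂ))}ᶜ) := hf.continuousOn
  -- continuity of f at any point other than the origin
  have hfc : ∀ p : ℂ × ℂ, p ≠ (0, 0) → ContinuousAt f p := fun p hp =>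
    hcont.continuousAt (compl_singleton_mem_nhds hp)
  have hfd : ∀ p : ℂ × ℂ, p ≠ (0, 0) → DifferentiableAt ℂ f p := fun p hp =>
    hf.differentiableAt (compl_singleton_mem_nhds hp)
  -- bound on the compact set (unit circle) × (closed unit ball)
  obtain ⟨M, hM⟩ : ∃ M, ∀ x ∈ (sphere (0:ℂ) 1 ×ˢ closedBall (0:ℂ) 1), ‖f x‖ ≤ M := by
    apply ((isCompact_sphere (0:ℂ) 1).prod (isCompact_closedBall (0:ℂ) 1)).exists_bound_of_continuousOn
    apply hcont.mono
    rintro ⟨a, b⟩ ⟨ha, -⟩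
    simp only [mem_sphere_iff_norm, sub_zero] at ha
    simp only [mem_compl_iff, mem_singleton_iff, Prod.mk.injEq, not_and]
    intro h0; exfalso; rw [h0] at ha; simp at ha
  have hM0 : 0 ≤ M := le_trans (norm_nonneg _) (hM (1, 0) (by simp))
  -- basic facts about circleMap
  have hcm : ∀ θ : ℝ, circleMap 0 1 θ ≠ 0 := fun θ => by
    simpa using circleMap_ne_center (R := 1) (c := (0:ℂ)) one_ne_zero (θ := θ)
  have hcma : ∀ θ : ℝ, ‖circleMap 0 1 θ‖ = 1 := fun θ => by
    simp [circleMap, norm_exp]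
  have hcms : ∀ θ : ℝ, circleMap 0 1 θ ∈ sphere (0:ℂ) 1 := fun θ => by
    simp [mem_sphere_iff_norm, hcma θ]
  have hsub : ∀ (θ : ℝ) (z : ℂ), ‖z‖ < 1 → circleMap 0 1 θ - z ≠ 0 := by
    intro θ z hz h0
    rw [sub_eq_zero] at h0
    rw [← h0, hcma θ] at hz
    exact lt_irrefl _ hz
  have hsub' : ∀ (θ : ℝ) (z : ℂ), ‖z‖ < 1 → (1 - ‖z‖) ≤ ‖circleMap 0 1 θ - z‖ := by
    intro θ z hz
    calc 1 - ‖z‖ = ‖circleMap 0 1 θ‖ - ‖z‖ := by rw [hcma θ]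
    _ ≤ ‖circleMap 0 1 θ - z‖ := norm_sub_norm_le _ _
  -- slices are differentiable
  have hsl2 : ∀ ζ : ℂ, ζ ≠ 0 → Differentiable ℂ (fun w => f (ζ, w)) := by
    intro ζ hζ w
    exact (hfd (ζ, w) (by simp [Prod.ext_iff, hζ])).comp w
      ((differentiableAt_const ζ).prodMk differentiableAt_id)
  have hsl1 : ∀ z₂ : ℂ, z₂ ≠ 0 → Differentiable ℂ (fun z => f (z, z₂)) := by
    intro z₂ h2 z
    exact (hfd (z, z₂) (by simp [Prod.ext_iff, h2])).comp z
      (differentiableAt_id.prodMk (differentiableAt_const z₂))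
  -- the Cauchy-integral candidate extension
  set h : ℂ × ℂ → E := fun p => (2 * Real.pi * I : ℂ)⁻¹ • ∮ z in C(0, 1), (z - p.1)⁻¹ • f (z, p.2) with hh
  set G : ℂ × ℂ → ℝ → E := fun p θ =>
    (circleMap 0 1 θ * I) • ((circleMap 0 1 θ - p.1)⁻¹ • f (circleMap 0 1 θ, p.2)) with hG
  have hGdef : ∀ p : ℂ × ℂ, h p = (2 * Real.pi * I : ℂ)⁻¹ • ∫ θ in (0:ℝ)..(2 * Real.pi), G p θ := by
    intro p
    simp only [hh, hG, circleIntegral, deriv_circleMap]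
  -- continuity in θ
  have hGc : ∀ p : ℂ × ℂ, ‖p.1‖ < 1 → Continuous (fun θ => G p θ) := by
    intro p hp1
    have hfθ : Continuous (fun θ : ℝ => f (circleMap 0 1 θ, p.2)) := by
      apply hcont.comp_continuous ((continuous_circleMap 0 1).prodMk continuous_const)
      intro θ
      simp [Prod.ext_iff, hcm θ]
    exact ((continuous_circleMap 0 1).mul continuous_const).smul
      ((((continuous_circleMap 0 1).sub continuous_const).inv₀
        (fun θ => hsub θ p.1 hp1)).smul hfθ)
  -- norm bound for G
  have hGnorm : ∀ (p : ℂ × ℂ) (θ : ℝ), ‖p.1‖ < 1 → ‖p.2‖ ≤ 1 →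
      ‖G p θ‖ ≤ (1 - ‖p.1‖)⁻¹ * M := by
    intro p θ hp1 hp2
    have h1 : ‖circleMap 0 1 θ * I‖ = 1 := by simp [hcma θ]
    have h2 : ‖f (circleMap 0 1 θ, p.2)‖ ≤ M :=
      hM _ (Set.mk_mem_prod (hcms θ) (by simpa [mem_closedBall_iff_norm] using hp2))
    have h3 : ‖(circleMap 0 1 θ - p.1)⁻¹‖ ≤ (1 - ‖p.1‖)⁻¹ := by
      rw [norm_inv]
      exact inv_anti₀ (by linarith) (hsub' θ p.1 hp1)
    calc ‖G p θ‖ = ‖circleMap 0 1 θ * I‖ * (‖(circleMap 0 1 θ - p.1)⁻¹‖ * ‖f (circleMap 0 1 θ, p.2)‖) := by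
          simp [hG, norm_smul]
    _ ≤ 1 * ((1 - ‖p.1‖)⁻¹ * M) := by
          rw [h1, one_mul, one_mul]
          exact mul_le_mul h3 h2 (norm_nonneg _) (inv_nonneg.2 (by linarith))
    _ = (1 - ‖p.1‖)⁻¹ * M := one_mul _
  -- Step A : Cauchy integral formula for z₂ ≠ 0
  have hA : ∀ p : ℂ × ℂ, ‖p.1‖ < 1 → p.2 ≠ 0 → h p = f p := by
    intro p hp1 hp2
    have := ((hsl1 p.2 hp2).diffContOnCl (s := ball (0:ℂ) 1)).two_pi_i_inv_smul_circleIntegral_sub_inv_smul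
      (w := p.1) (by simpa [mem_ball_zero_iff] using hp1)
    simpa [hh] using this
  -- Step B : h agrees with f also on the slice z₂ = 0 (away from z₁ = 0)
  have hB : ∀ z₁ : ℂ, ‖z₁‖ < 1 → z₁ ≠ 0 → h (z₁, 0) = f (z₁, 0) := by
    intro z₁ h1 h0
    -- h (z₁, ·) tends to h (z₁, 0) at 0 by dominated convergence
    have ht : Tendsto (fun z₂ : ℂ => ∫ θ in (0:ℝ)..(2 * Real.pi), G (z₁, z₂) θ) (𝓝 0)
        (𝓝 (∫ θ in (0:ℝ)..(2 * Real.pi), G (z₁, 0) θ)) := by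
      apply intervalIntegral.tendsto_integral_filter_of_dominated_convergence
        (bound := fun _ => (1 - ‖z₁‖)⁻¹ * M)
      · exact Eventually.of_forall fun z₂ => (hGc (z₁, z₂) h1).aestronglyMeasurable
      · filter_upwards [Metric.closedBall_mem_nhds (0:ℂ) one_pos] with z₂ hz₂
        exact ae_of_all _ fun θ _ => hGnorm (z₁, z₂) θ h1 (mem_closedBall_zero_iff.1 hz₂)
      · exact intervalIntegrable_const
      · apply Eventually.of_forall
        intro θ _
        have hfc2 : ContinuousAt (fun z₂ : ℂ => f (circleMap 0 1 θ, z₂)) 0 :=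
          (hfc (circleMap 0 1 θ, 0) (by simp [Prod.ext_iff, hcm θ])).comp
            ((continuous_const.prodMk continuous_id).continuousAt)
        exact ((hfc2.tendsto.const_smul ((circleMap 0 1 θ - z₁)⁻¹)).const_smul
          (circleMap 0 1 θ * I))
    have ht' : Tendsto (fun z₂ : ℂ => h (z₁, z₂)) (𝓝 0) (𝓝 (h (z₁, 0))) := by
      simp only [hGdef]
      exact ht.const_smul _
    have htf : Tendsto (fun z₂ : ℂ => f (z₁, z₂)) (𝓝[≠] 0) (𝓝 (f (z₁, 0))) :=
      (((hfc (z₁, 0) (by simp [Prod.ext_iff, h0])).comp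
        ((continuous_const.prodMk continuous_id).continuousAt)).tendsto).mono_left
        nhdsWithin_le_nhds
    have heq : ∀ᶠ z₂ in 𝓝[≠] (0:ℂ), (fun z₂ : ℂ => h (z₁, z₂)) z₂ = f (z₁, z₂) := by
      filter_upwards [self_mem_nhdsWithin] with z₂ hz₂
      exact hA (z₁, z₂) h1 hz₂
    exact tendsto_nhds_unique (((ht'.mono_left nhdsWithin_le_nhds).congr' heq)) htf
  -- Cauchy estimate for the partial derivative in the second variable
  have hder_bound : ∀ (θ : ℝ) (z₂ : ℂ), ‖z₂‖ ≤ 1/2 →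
      ‖deriv (fun w => f (circleMap 0 1 θ, w)) z₂‖ ≤ 2 * M := by
    intro θ z₂ hz₂
    have key := Complex.norm_deriv_le_of_forall_mem_sphere_norm_le (c := z₂) (R := 1/2) (C := M)
      (by norm_num) ((hsl2 _ (hcm θ)).diffContOnCl) ?_
    · have : M / (1/2 : ℝ) = 2 * M := by ring
      linarith [key, this.le]
    · intro z hz
      apply hM
      refine Set.mk_mem_prod (hcms θ) ?_
      rw [mem_closedBall_zero_iff]
      have hzz : ‖z - z₂‖ = 1/2 := by simpa [mem_sphere_iff_norm] using hz
      calc ‖z‖ = ‖z - z₂ + z₂‖ := by ring_nf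
      _ ≤ ‖z - z₂‖ + ‖z₂‖ := norm_add_le _ _
      _ ≤ 1 := by rw [hzz]; linarith
  -- the candidate fderiv of the integrand
  set G' : ℂ × ℂ → ℝ → (ℂ × ℂ) →L[ℂ] E := fun p θ =>
    (circleMap 0 1 θ * I) •
      ((circleMap 0 1 θ - p.1)⁻¹ •
          ((ContinuousLinearMap.snd ℂ ℂ ℂ).smulRight
            (deriv (fun w => f (circleMap 0 1 θ, w)) p.2)) +
        ContinuousLinearMap.smulRight
          ((-(-1) / (circleMap 0 1 θ - p.1) ^ 2) • ContinuousLinearMap.fst ℂ ℂ ℂ)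
          (f (circleMap 0 1 θ, p.2))) with hG'
  have hdiffG : ∀ (θ : ℝ), ∀ p ∈ ball (0 : ℂ × ℂ) (1/4),
      HasFDerivAt (fun q => G q θ) (G' p θ) p := by
    intro θ p hp
    have hp' : ‖p‖ < 1/4 := mem_ball_zero_iff.1 hp
    have hp1 : ‖p.1‖ < 1 := lt_of_le_of_lt (norm_fst_le p) (by linarith)
    have hne : circleMap 0 1 θ - p.1 ≠ 0 := hsub θ p.1 hp1
    have hc : HasFDerivAt (fun q : ℂ × ℂ => (circleMap 0 1 θ - q.1)⁻¹)
        ((-(-1) / (circleMap 0 1 θ - p.1) ^ 2) • ContinuousLinearMap.fst ℂ ℂ ℂ) p := by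
      have h₁ : HasDerivAt (fun z : ℂ => (circleMap 0 1 θ - z)⁻¹)
          (-(-1) / (circleMap 0 1 θ - p.1) ^ 2) p.1 :=
        ((hasDerivAt_id p.1).const_sub _).inv hne
      exact h₁.comp_hasFDerivAt p hasFDerivAt_fst
    have hv : HasFDerivAt (fun q : ℂ × ℂ => f (circleMap 0 1 θ, q.2))
        ((ContinuousLinearMap.snd ℂ ℂ ℂ).smulRight
          (deriv (fun w => f (circleMap 0 1 θ, w)) p.2)) p := by
      have h₂ : HasFDerivAt (fun w => f (circleMap 0 1 θ, w))
          (ContinuousLinearMap.smulRight (1 : ℂ →L[ℂ] ℂ)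
            (deriv (fun w => f (circleMap 0 1 θ, w)) p.2)) p.2 :=
        (((hsl2 _ (hcm θ)) p.2).hasDerivAt).hasFDerivAt
      have h₃ := h₂.comp p (hasFDerivAt_snd (𝕜 := ℂ) (E := ℂ) (F := ℂ))
      have h₄ : (ContinuousLinearMap.smulRight (1 : ℂ →L[ℂ] ℂ)
          (deriv (fun w => f (circleMap 0 1 θ, w)) p.2)).comp (ContinuousLinearMap.snd ℂ ℂ ℂ) =
          (ContinuousLinearMap.snd ℂ ℂ ℂ).smulRight (deriv (fun w => f (circleMap 0 1 θ, w)) p.2) := by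
        ext q
        all_goals rfl
      rw [← h₄]
      exact h₃
    exact (hc.smul hv).const_smul _
  -- measurability of θ ↦ ∂₂ f (ζ θ, 0)
  have hdmeas : StronglyMeasurable (fun θ : ℝ => deriv (fun w => f (circleMap 0 1 θ, w)) (0:ℂ)) := by
    apply stronglyMeasurable_of_tendsto (u := (atTop : Filter ℕ))
      (f := fun (n : ℕ) (θ : ℝ) => slope (fun w => f (circleMap 0 1 θ, w)) 0 (((n:ℂ)+1)⁻¹))
    · intro n
      apply Continuous.stronglyMeasurable
      have hc1 : Continuous (fun θ : ℝ => f (circleMap 0 1 θ, (((n:ℂ)+1)⁻¹))) := by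
        apply hcont.comp_continuous ((continuous_circleMap 0 1).prodMk continuous_const)
        intro θ; simp [Prod.ext_iff, hcm θ]
      have hc0 : Continuous (fun θ : ℝ => f (circleMap 0 1 θ, (0:ℂ))) := by
        apply hcont.comp_continuous ((continuous_circleMap 0 1).prodMk continuous_const)
        intro θ; simp [Prod.ext_iff, hcm θ]
      simp only [slope_def_module]
      exact (continuous_const.smul (hc1.sub hc0))
    · rw [tendsto_pi_nhds]
      intro θ
      have hd : HasDerivAt (fun w => f (circleMap 0 1 θ, w))
          (deriv (fun w => f (circleMap 0 1 θ, w)) (0:ℂ)) 0 :=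
        ((hsl2 _ (hcm θ)) 0).hasDerivAt
      have hs := hasDerivAt_iff_tendsto_slope.1 hd
      apply hs.comp
      rw [tendsto_nhdsWithin_iff]
      constructor
      · rw [tendsto_zero_iff_norm_tendsto_zero]
        have hnn : ∀ n : ℕ, ‖((n:ℂ)+1)⁻¹‖ = 1/((n:ℝ)+1) := by
          intro n
          rw [norm_inv, one_div]
          congr 1
          have : ((n:ℂ)+1) = ((((n:ℝ)+1 : ℝ)) : ℂ) := by push_cast; ring
          rw [this, Complex.norm_real, Real.norm_eq_abs]
          exact abs_of_nonneg (by positivity)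
        simp only [hnn]
        exact tendsto_one_div_add_atTop_nhds_zero_nat
      · apply Eventually.of_forall
        intro n
        simp only [mem_compl_iff, mem_singleton_iff, inv_eq_zero]
        exact Nat.cast_add_one_ne_zero n
  -- differentiability of h at the origin
  have hhd : HasFDerivAt h ((2 * Real.pi * I : ℂ)⁻¹ •
      ∫ θ in (0:ℝ)..(2 * Real.pi), G' 0 θ) 0 := by
    have key : HasFDerivAt (fun p => ∫ θ in (0:ℝ)..(2 * Real.pi), G p θ)
        (∫ θ in (0:ℝ)..(2 * Real.pi), G' 0 θ) 0 := by
      apply intervalIntegral.hasFDerivAt_integral_of_dominated_of_fderiv_le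
        (s := ball (0 : ℂ × ℂ) (1/4)) (bound := fun _ => 6 * M) (ball_mem_nhds _ (by norm_num))
      · filter_upwards [ball_mem_nhds (0 : ℂ × ℂ) (by norm_num : (0:ℝ) < 1/4)] with p hp
        have hp1 : ‖p.1‖ < 1 :=
          lt_of_le_of_lt (norm_fst_le p) (lt_trans (mem_ball_zero_iff.1 hp) (by norm_num))
        exact (hGc p hp1).aestronglyMeasurable
      · exact (hGc 0 (by simp)).intervalIntegrable _ _
      · -- measurability of G' 0
        apply StronglyMeasurable.aestronglyMeasurable
        simp only [hG']
        apply StronglyMeasurable.fun_smul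
        · exact ((continuous_circleMap 0 1).mul continuous_const).stronglyMeasurable
        apply StronglyMeasurable.fun_add
        · apply StronglyMeasurable.fun_smul
          · exact (((continuous_circleMap 0 1).sub continuous_const).inv₀
              (fun θ => hsub θ 0 (by simp))).stronglyMeasurable
          · exact (isBoundedBilinearMap_smulRight (𝕜 := ℂ)).continuous.comp_stronglyMeasurable
              (stronglyMeasurable_const.prodMk hdmeas)
        · apply Continuous.stronglyMeasurable
          have hs : Continuous (fun θ : ℝ =>
              ((-(-1) / (circleMap 0 1 θ - (0 : ℂ × ℂ).1) ^ 2) • ContinuousLinearMap.fst ℂ ℂ ℂ)) := by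
            apply Continuous.fun_smul _ continuous_const
            apply Continuous.div continuous_const
              (((continuous_circleMap 0 1).sub continuous_const).pow 2)
            exact fun θ => pow_ne_zero 2 (hsub θ _ (by simp))
          have hvθ : Continuous (fun θ : ℝ => f (circleMap 0 1 θ, (0 : ℂ × ℂ).2)) := by
            apply hcont.comp_continuous ((continuous_circleMap 0 1).prodMk continuous_const)
            intro θ; simp [Prod.ext_iff, hcm θ]
          have hpair := hs.prodMk hvθ
          exact (isBoundedBilinearMap_smulRight (𝕜 := ℂ)).continuous.comp hpair
      · apply ae_of_all
        intro θ _ p hp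
        have hp' : ‖p‖ < 1/4 := mem_ball_zero_iff.1 hp
        have hp1 : ‖p.1‖ ≤ 1/4 := le_trans (norm_fst_le p) hp'.le
        have hp2 : ‖p.2‖ ≤ 1/4 := le_trans (norm_snd_le p) hp'.le
        have h34 : (3/4 : ℝ) ≤ ‖circleMap 0 1 θ - p.1‖ :=
          le_trans (by linarith) (hsub' θ p.1 (by linarith))
        have hil : ‖(circleMap 0 1 θ - p.1)⁻¹‖ ≤ 2 := by
          rw [norm_inv]
          calc ‖circleMap 0 1 θ - p.1‖⁻¹ ≤ (3/4 : ℝ)⁻¹ := inv_anti₀ (by norm_num) h34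
          _ ≤ 2 := by norm_num
        have hd2 : ‖deriv (fun w => f (circleMap 0 1 θ, w)) p.2‖ ≤ 2*M :=
          hder_bound θ p.2 (by linarith)
        have hfv : ‖f (circleMap 0 1 θ, p.2)‖ ≤ M :=
          hM _ (Set.mk_mem_prod (hcms θ) (by rw [mem_closedBall_zero_iff]; linarith))
        have eX : ‖(ContinuousLinearMap.snd ℂ ℂ ℂ).smulRight
            (deriv (fun w => f (circleMap 0 1 θ, w)) p.2)‖ ≤ 2*M := by
          rw [ContinuousLinearMap.norm_smulRight_apply]
          calc ‖ContinuousLinearMap.snd ℂ ℂ ℂ‖ * ‖deriv (fun w => f (circleMap 0 1 θ, w)) p.2‖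
              ≤ 1 * (2*M) :=
                mul_le_mul (ContinuousLinearMap.norm_snd_le ..) hd2 (norm_nonneg _) one_pos.le
          _ = 2*M := one_mul _
        have e1 : ‖(circleMap 0 1 θ - p.1)⁻¹ • (ContinuousLinearMap.snd ℂ ℂ ℂ).smulRight
            (deriv (fun w => f (circleMap 0 1 θ, w)) p.2)‖ ≤ 2 * (2*M) := by
          refine le_trans (ContinuousLinearMap.opNorm_smul_le _ _) ?_
          exact mul_le_mul hil eX (norm_nonneg _) (by norm_num)
        have e2 : ‖ContinuousLinearMap.smulRight
            ((-(-1) / (circleMap 0 1 θ - p.1) ^ 2) • ContinuousLinearMap.fst ℂ ℂ ℂ)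
            (f (circleMap 0 1 θ, p.2))‖ ≤ 2 * M := by
          rw [ContinuousLinearMap.norm_smulRight_apply]
          have hc2 : ‖(-(-1) / (circleMap 0 1 θ - p.1) ^ 2) • ContinuousLinearMap.fst ℂ ℂ ℂ‖ ≤ 2 := by
            refine le_trans (ContinuousLinearMap.opNorm_smul_le _ _) ?_
            have hsc : ‖(-(-1 : ℂ)) / (circleMap 0 1 θ - p.1) ^ 2‖ ≤ 2 := by
              rw [norm_div, norm_pow]
              have h916 : (9/16 : ℝ) ≤ ‖circleMap 0 1 θ - p.1‖^2 := by nlinarith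
              have h2 : ‖(-(-1) : ℂ)‖ = 1 := by norm_num
              rw [h2, div_le_iff₀ (by nlinarith)]
              nlinarith
            have hfst : ‖ContinuousLinearMap.fst ℂ ℂ ℂ‖ ≤ 1 :=
              ContinuousLinearMap.norm_fst_le ..
            calc ‖(-(-1 : ℂ)) / (circleMap 0 1 θ - p.1) ^ 2‖ * ‖ContinuousLinearMap.fst ℂ ℂ ℂ‖
                ≤ 2 * 1 := mul_le_mul hsc hfst (norm_nonneg _) (by norm_num)
            _ = 2 := by norm_num
          exact mul_le_mul hc2 hfv (norm_nonneg _) (by norm_num)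
        refine le_trans (ContinuousLinearMap.opNorm_smul_le (circleMap 0 1 θ * I) _) ?_
        have hI : ‖circleMap 0 1 θ * I‖ = 1 := by simp [norm_mul, hcma θ]
        rw [hI, one_mul]
        refine le_trans (norm_add_le _ _) ?_
        linarith
      · exact intervalIntegrable_const
      · exact ae_of_all _ fun θ _ p hp => hdiffG θ p hp
    exact (key.const_smul _).congr_of_eventuallyEq (Eventually.of_forall hGdef)
  -- assemble the global extension
  refine ⟨fun w => if w = ((0:ℂ), (0:ℂ)) then h ((0:ℂ), (0:ℂ)) else f w, ?_, ?_⟩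
  · intro p
    by_cases hp : p = ((0:ℂ), (0:ℂ))
    · subst hp
      have heq : (fun w : ℂ × ℂ => if w = ((0:ℂ), (0:ℂ)) then h ((0:ℂ), (0:ℂ)) else f w)
          =ᶠ[𝓝 ((0:ℂ), (0:ℂ))] h := by
        rw [Prod.mk_zero_zero]
        filter_upwards [ball_mem_nhds (0 : ℂ × ℂ) (by norm_num : (0:ℝ) < 1/4)] with q hq
        show (if q = ((0:ℂ), (0:ℂ)) then h ((0:ℂ), (0:ℂ)) else f q) = h q
        by_cases h0 : q = ((0:ℂ), (0:ℂ))
        · rw [if_pos h0, h0]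
        · rw [if_neg h0]
          have hq' : ‖q‖ < 1/4 := mem_ball_zero_iff.1 hq
          have hq1 : ‖q.1‖ < 1 := lt_of_le_of_lt (norm_fst_le q) (by linarith)
          by_cases h2 : q.2 = 0
          · have h1 : q.1 ≠ 0 := by
              intro hcontra
              exact h0 (Prod.ext hcontra h2)
            have := hB q.1 hq1 h1
            rw [show q = (q.1, q.2) from rfl, h2]
            exact this.symm
          · exact (hA q hq1 h2).symm
      have hd0 : DifferentiableAt ℂ h ((0:ℂ), (0:ℂ)) := by
        rw [Prod.mk_zero_zero]; exact hhd.differentiableAt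
      exact hd0.congr_of_eventuallyEq heq
    · have heq : (fun w : ℂ × ℂ => if w = ((0:ℂ), (0:ℂ)) then h ((0:ℂ), (0:ℂ)) else f w)
          =ᶠ[𝓝 p] f := by
        filter_upwards [compl_singleton_mem_nhds hp] with q hq
        exact if_neg hq
      exact (hfd p hp).congr_of_eventuallyEq heq
  · intro w hw
    exact if_neg hw
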